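/- In the no-limit clairvoyance game with n = 2, the unique observable perfect equilibrium strategy for player 2 (after observing a bet of 1) calls the bet of 1 with probability 5/9: for every α ∈ [1/2, 2/3] with α ≠ 5/9, no Nash equilibrium of the perturbed game G_ε (requiring φ(W,1)+φ(L,1) ≥ ε) has player 2 calling a bet of 1 with probability α, while for α = 5/9 such equilibria exist for all small ε > 0. -/
import Mathlib


/-!  A concrete model of the no-limit clairvoyance game with integer bet sizes.
Player 1 is dealt a winning hand (`true`) or losing hand (`false`) with probability
1/2 each, bets an integer `x ∈ {0,…,n}` (0 = check), and player 2 calls or folds.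
A strategy for player 1 assigns to each hand a probability distribution over bet
sizes; a strategy for player 2 assigns to each bet size a calling probability. -/

/-- `s` is a valid strategy for player 1 in the clairvoyance game with stack `n`. -/
def IsStrat1 (n : ℕ) (s : Bool → ℕ → ℝ) : Prop :=
  (∀ h x, 0 ≤ s h x) ∧ (∀ h : Bool, ∑ x ∈ Finset.range (n + 1), s h x = 1)

/-- `s` is a valid strategy for player 2 (a calling probability for each bet size). -/
def IsStrat2 (n : ℕ) (s : ℕ → ℝ) : Prop :=
  ∀ x, 0 ≤ s x ∧ s x ≤ 1

/-- Player 1's payoff with hand `h` after betting `x`, when player 2 calls a bet of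
size `x` with probability `s2 x`: a check yields ±0.5, a called bet of `x` yields
±(0.5 + x), and a fold yields +0.5. -/
noncomputable def pay (s2 : ℕ → ℝ) (h : Bool) (x : ℕ) : ℝ :=
  if x = 0 then (if h then 0.5 else -0.5)
  else s2 x * (if h then (0.5 + (x : ℝ)) else -(0.5 + (x : ℝ))) + (1 - s2 x) * 0.5

/-- Player 1's expected payoff (hands equiprobable); the game is zero-sum. -/
noncomputable def u1 (n : ℕ) (s1 : Bool → ℕ → ℝ) (s2 : ℕ → ℝ) : ℝ :=
  (1/2) * ∑ x ∈ Finset.range (n + 1), s1 true x * pay s2 true x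
    + (1/2) * ∑ x ∈ Finset.range (n + 1), s1 false x * pay s2 false x

/-- `(s1, s2)` is a Nash equilibrium of the (zero-sum) clairvoyance game:
no unilateral profitable deviation. -/
def IsNash (n : ℕ) (s1 : Bool → ℕ → ℝ) (s2 : ℕ → ℝ) : Prop :=
  IsStrat1 n s1 ∧ IsStrat2 n s2 ∧
  (∀ s1', IsStrat1 n s1' → u1 n s1' s2 ≤ u1 n s1 s2) ∧
  (∀ s2', IsStrat2 n s2' → u1 n s1 s2 ≤ u1 n s1 s2')

/-- Nash equilibrium of the perturbed game `G_ε` (with `n = 2`) in which player 1 must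
bet 1 with total probability (over the winning and losing hand) at least `ε`. -/
def IsNashPert (ε : ℝ) (s1 : Bool → ℕ → ℝ) (s2 : ℕ → ℝ) : Prop :=
  IsStrat1 2 s1 ∧ ε ≤ s1 true 1 + s1 false 1 ∧ IsStrat2 2 s2 ∧
  (∀ s1', IsStrat1 2 s1' → ε ≤ s1' true 1 + s1' false 1 →
    u1 2 s1' s2 ≤ u1 2 s1 s2) ∧
  (∀ s2', IsStrat2 2 s2' → u1 2 s1 s2 ≤ u1 2 s1 s2')

-- The perturbed equilibrium strategy of player 1 for `α = 5/9`.
noncomputable def myS1 (ε : ℝ) : Bool → ℕ → ℝ := fun h x =>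
  if h then (if x = 1 then 2*ε/3 else if x = 2 then 1 - 2*ε/3 else 0)
  else (if x = 1 then ε/3 else if x = 2 then 2/3 - 4*ε/9 else 1/3 + ε/9)

-- Against `myS1 ε`, every strategy of player 2 yields the same payoff.
lemma myS1_eval (ε : ℝ) (s2' : ℕ → ℝ) : u1 2 (myS1 ε) s2' = 1/3 - ε/18 := by
  simp [u1, pay, myS1, Finset.sum_range_succ]
  ring

lemma u1_expand (s1 : Bool → ℕ → ℝ) (s2 : ℕ → ℝ) :
    u1 2 s1 s2 = (1/2) * (s1 true 0 * (1/2)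
      + s1 true 1 * (s2 1 * (3/2) + (1 - s2 1) * (1/2))
      + s1 true 2 * (s2 2 * (5/2) + (1 - s2 2) * (1/2)))
    + (1/2) * (s1 false 0 * (-(1/2))
      + s1 false 1 * (s2 1 * (-(3/2)) + (1 - s2 1) * (1/2))
      + s1 false 2 * (s2 2 * (-(5/2)) + (1 - s2 2) * (1/2))) := by
  simp [u1, pay, Finset.sum_range_succ]
  norm_num

set_option maxHeartbeats 1600000 in
/-- In the clairvoyance game with `n = 2`, the unique observable perfect equilibrium
strategy for player 2 after observing a bet of 1 calls it with probability 5/9: among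
the Nash equilibrium calling probabilities `α ∈ [1/2, 2/3]` (with a bet of 2 called
with probability 1/3), for `α ≠ 5/9` no Nash equilibrium of the perturbed game `G_ε`
has player 2 calling a bet of 1 with probability `α`, while for `α = 5/9` such
perturbed equilibria exist for all small `ε > 0`. -/
theorem ope_calls_five_ninths (α : ℝ) (h1 : 1/2 ≤ α) (h2 : α ≤ 2/3)
    (s2 : ℕ → ℝ) (hs2 : s2 = fun x => if x = 2 then 1/3 else α) :
    (α ≠ 5/9 → ∀ ε : ℝ, 0 < ε → ε ≤ 1 → ¬ ∃ s1, IsNashPert ε s1 s2) ∧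
    (α = 5/9 → ∀ ε : ℝ, 0 < ε → ε ≤ 1 → ∃ s1, IsNashPert ε s1 s2) := by
  have hs21 : s2 1 = α := by rw [hs2]; norm_num
  have hs22 : s2 2 = 1/3 := by rw [hs2]; norm_num
  constructor
  · -- nonexistence for α ≠ 5/9
    rintro hα ε hε hε1 ⟨s1, ⟨⟨hpos, hsum⟩, hcon, _, hopt1, hopt2⟩⟩
    set a := s1 true 0 with ha
    set b := s1 true 1 with hb
    set c := s1 true 2 with hc
    set d := s1 false 0 with hd
    set e := s1 false 1 with he
    set f := s1 false 2 with hf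
    have hsT : a + b + c = 1 := by
      have := hsum true; simpa [Finset.sum_range_succ] using this
    have hsF : d + e + f = 1 := by
      have := hsum false; simpa [Finset.sum_range_succ] using this
    -- Player 2 deviations at bet 1 force b = 2e
    have key : b = 2 * e := by
      have h0 : u1 2 s1 s2 ≤ u1 2 s1 (fun x => if x = 1 then 0 else s2 x) := by
        apply hopt2
        intro x
        rw [hs2]; dsimp only
        split_ifs <;> norm_num <;> constructor <;> linarith
      have h1' : u1 2 s1 s2 ≤ u1 2 s1 (fun x => if x = 1 then 1 else s2 x) := by
        apply hopt2
        intro x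
        rw [hs2]; dsimp only
        split_ifs <;> norm_num <;> constructor <;> linarith
      rw [u1_expand, u1_expand] at h0 h1'
      simp only [hs21, hs22] at h0 h1'
      norm_num at h0 h1'
      nlinarith [h0, h1']
    have he3 : ε ≤ 3 * e := by
      have : ε ≤ b + e := hcon
      linarith
    -- Player 1 deviation
    rcases lt_or_gt_of_ne hα with hlt | hgt
    · -- α < 5/9 : deviate to true:(0,0,1), false:(1-ε,ε,0)
      set s1' : Bool → ℕ → ℝ := fun h x =>
        if h then (if x = 2 then 1 else 0) else (if x = 0 then 1 - ε else if x = 1 then ε else 0) with hs1'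
      have hstrat : IsStrat1 2 s1' := by
        constructor
        · intro h x; rw [hs1']; dsimp only; split_ifs <;> norm_num <;> linarith
        · intro h; rw [hs1']; cases h <;> simp [Finset.sum_range_succ]
      have hdev := hopt1 s1' hstrat (by rw [hs1']; norm_num)
      rw [u1_expand, u1_expand] at hdev
      simp only [hs21, hs22, hs1'] at hdev
      norm_num at hdev
      have hint1 : α * b = 2 * (α * e) := by rw [key]; ring
      have hint2 : 0 < ε * (5/9 - α) := mul_pos hε (by linarith)
      linarith [hdev, hsT, hsF, key, he3, hint1, hint2, hpos true 0, hpos false 0]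
    · -- α > 5/9 : deviate to true:(0,ε,1-ε), false:(1,0,0)
      set s1' : Bool → ℕ → ℝ := fun h x =>
        if h then (if x = 1 then ε else if x = 2 then 1 - ε else 0) else (if x = 0 then 1 else 0) with hs1'
      have hstrat : IsStrat1 2 s1' := by
        constructor
        · intro h x; rw [hs1']; dsimp only; split_ifs <;> norm_num <;> linarith
        · intro h; rw [hs1']; cases h <;> simp [Finset.sum_range_succ]
      have hdev := hopt1 s1' hstrat (by rw [hs1']; norm_num)
      rw [u1_expand, u1_expand] at hdev
      simp only [hs21, hs22, hs1'] at hdev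
      norm_num at hdev
      have hint1 : α * b = 2 * (α * e) := by rw [key]; ring
      have hint2 : 0 < ε * (α - 5/9) := mul_pos hε (by linarith)
      linarith [hdev, hsT, hsF, key, he3, hint1, hint2, hpos true 0, hpos false 0]
  · -- existence for α = 5/9
    rintro hα ε hε hε1
    subst hα
    refine ⟨myS1 ε, ⟨?_, ?_⟩, ?_, ?_, ?_, ?_⟩
    · intro h x; unfold myS1; split_ifs <;> norm_num <;> linarith
    · intro h; unfold myS1; cases h <;> simp [Finset.sum_range_succ] <;> ring
    · unfold myS1; norm_num; linarith
    · intro x; rw [hs2]; dsimp only; split_ifs <;> norm_num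
    · intro s1' ⟨hpos', hsum'⟩ hcon'
      have hsT : s1' true 0 + s1' true 1 + s1' true 2 = 1 := by
        have := hsum' true; simpa [Finset.sum_range_succ] using this
      have hsF : s1' false 0 + s1' false 1 + s1' false 2 = 1 := by
        have := hsum' false; simpa [Finset.sum_range_succ] using this
      rw [u1_expand s1' s2, myS1_eval]
      simp only [hs21, hs22]
      norm_num
      linarith [hpos' true 0, hpos' false 0, hcon', hsT, hsF]
    · intro s2' hs2'
      rw [myS1_eval, myS1_eval]
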